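/- Let 𝟙 ∈ C([0,1],ℝ) denote the constant function 1. Then for every integer n ≥ 1 and every t ∈ [0,1], the n-th iterate of K satisfies (Kⁿ𝟙)(t) ≥ ρ(t)·τ₂·τ₁^(n−1). -/

import Mathlib

open MeasureTheory Set Filter

noncomputable def G (α t s : ℝ) : ℝ :=
  if s ≤ t then (t * (1 - s) ^ (α - 1) - (t - s) ^ (α - 1)) / Real.Gamma α
  else t * (1 - s) ^ (α - 1) / Real.Gamma α

noncomputable def Psi (α s : ℝ) : ℝ := (1 - s) ^ (α - 1) / Real.Gamma α

/-- Integral of `f` over `[0,1]` against the finite signed measure `ν`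
(via its Jordan decomposition). -/
noncomputable def stInt (ν : MeasureTheory.SignedMeasure ℝ) (f : ℝ → ℝ) : ℝ :=
  ∫ t in Icc (0:ℝ) 1, f t ∂ν.toJordanDecomposition.posPart
    - ∫ t in Icc (0:ℝ) 1, f t ∂ν.toJordanDecomposition.negPart

noncomputable def gA (α : ℝ) (ν : MeasureTheory.SignedMeasure ℝ) (s : ℝ) : ℝ :=
  stInt ν (fun t => G α t s)

noncomputable def Lam (η μ₀ β : ℝ) (ν : MeasureTheory.SignedMeasure ℝ) : ℝ :=
  μ₀ * η + β * stInt ν (fun t => t)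

noncomputable def Hker (α η μ₀ β : ℝ) (ν : MeasureTheory.SignedMeasure ℝ) (t s : ℝ) : ℝ :=
  β * t / (1 - Lam η μ₀ β ν) * gA α ν s
    + μ₀ * t / (1 - Lam η μ₀ β ν) * G α η s + G α t s

noncomputable def Phi (α η μ₀ β : ℝ) (ν : MeasureTheory.SignedMeasure ℝ) (s : ℝ) : ℝ :=
  β / (1 - Lam η μ₀ β ν) * gA α ν s
    + (μ₀ - Lam η μ₀ β ν + 1) / (1 - Lam η μ₀ β ν) * Psi α s

noncomputable def rho (α η t : ℝ) : ℝ := (η - η ^ (α - 1)) * (t - t ^ (α - 1))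

noncomputable def tau1 (α η μ₀ β : ℝ) (ν : MeasureTheory.SignedMeasure ℝ) : ℝ :=
  ∫ s in Icc (0:ℝ) 1, rho α η s * Phi α η μ₀ β ν s

noncomputable def tau2 (α η μ₀ β : ℝ) (ν : MeasureTheory.SignedMeasure ℝ) : ℝ :=
  ∫ s in Icc (0:ℝ) 1, Phi α η μ₀ β ν s

section Aux

open MeasureTheory Set

lemma rpow_le_self' {t : ℝ} (ht0 : 0 ≤ t) (ht1 : t ≤ 1) {c : ℝ} (hc : 1 ≤ c) :
    t ^ c ≤ t := by
  rcases eq_or_lt_of_le ht0 with h | h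
  · rw [← h, Real.zero_rpow (by linarith)]
  · calc t ^ c ≤ t ^ (1:ℝ) := Real.rpow_le_rpow_of_exponent_ge h ht1 hc
      _ = t := Real.rpow_one t

lemma G_cont {α : ℝ} (hα : 1 < α) : Continuous fun p : ℝ × ℝ => G α p.1 p.2 := by
  have hrc : Continuous fun x : ℝ => x ^ (α - 1) :=
    Real.continuous_rpow_const (by linarith)
  have h1 : Continuous fun p : ℝ × ℝ =>
      (p.1 * (1 - p.2) ^ (α - 1) - (p.1 - p.2) ^ (α - 1)) / Real.Gamma α :=
    ((continuous_fst.mul (hrc.comp (continuous_const.sub continuous_snd))).sub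
      (hrc.comp (continuous_fst.sub continuous_snd))).div_const _
  have h2 : Continuous fun p : ℝ × ℝ => p.1 * (1 - p.2) ^ (α - 1) / Real.Gamma α :=
    (continuous_fst.mul (hrc.comp (continuous_const.sub continuous_snd))).div_const _
  have key : Continuous fun p : ℝ × ℝ =>
      if p.2 ≤ p.1 then (p.1 * (1 - p.2) ^ (α - 1) - (p.1 - p.2) ^ (α - 1)) / Real.Gamma α
      else p.1 * (1 - p.2) ^ (α - 1) / Real.Gamma α := by
    refine Continuous.if ?_ h1 h2
    intro a ha
    have h := frontier_le_subset_eq continuous_snd continuous_fst ha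
    have h' : a.1 - a.2 = 0 := by
      have : a.2 = a.1 := h
      linarith
    rw [h', Real.zero_rpow (by linarith)]
    ring
  simpa only [G] using key

lemma G_abs_le {α : ℝ} (hα : 1 < α) {t s : ℝ} (ht : t ∈ Icc (0:ℝ) 1)
    (hs : s ∈ Icc (0:ℝ) 1) : |G α t s| ≤ 2 / Real.Gamma α := by
  have hΓ : 0 < Real.Gamma α := Real.Gamma_pos_of_pos (by linarith)
  have hc0 : (0:ℝ) ≤ α - 1 := by linarith
  have h1 : |t * (1 - s) ^ (α - 1)| ≤ 1 := by
    rw [abs_mul, abs_of_nonneg ht.1,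
      abs_of_nonneg (Real.rpow_nonneg (by linarith [hs.2]) _)]
    have hle : (1 - s) ^ (α - 1) ≤ 1 :=
      Real.rpow_le_one (by linarith [hs.2]) (by linarith [hs.1]) hc0
    have h0 : 0 ≤ (1 - s) ^ (α - 1) := Real.rpow_nonneg (by linarith [hs.2]) _
    nlinarith [ht.1, ht.2]
  unfold G
  rcases le_or_gt s t with h | h
  · rw [if_pos h, abs_div, abs_of_pos hΓ]
    have h2 : |(t - s) ^ (α - 1)| ≤ 1 := by
      calc |(t - s) ^ (α - 1)| ≤ |t - s| ^ (α - 1) := Real.abs_rpow_le_abs_rpow _ _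
        _ ≤ 1 := Real.rpow_le_one (abs_nonneg _)
            (abs_le.2 ⟨by linarith [hs.2, ht.1], by linarith [ht.2, hs.1]⟩) hc0
    have h3 : |t * (1 - s) ^ (α - 1) - (t - s) ^ (α - 1)| ≤ 2 := by
      calc |t * (1 - s) ^ (α - 1) - (t - s) ^ (α - 1)|
          ≤ |t * (1 - s) ^ (α - 1)| + |(t - s) ^ (α - 1)| := abs_sub _ _
        _ ≤ 2 := by linarith
    exact (div_le_div_iff_of_pos_right hΓ).2 h3
  · rw [if_neg (not_le.2 h), abs_div, abs_of_pos hΓ]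
    exact (div_le_div_iff_of_pos_right hΓ).2 (by linarith)

lemma G_lower {α : ℝ} (hα : 2 ≤ α) {t s : ℝ} (ht : t ∈ Icc (0:ℝ) 1)
    (hs : s ∈ Icc (0:ℝ) 1) : (t - t ^ (α - 1)) * Psi α s ≤ G α t s := by
  have hΓ : 0 < Real.Gamma α := Real.Gamma_pos_of_pos (by linarith)
  have hc0 : (0:ℝ) ≤ α - 1 := by linarith
  have hΨ0 : 0 ≤ (1 - s) ^ (α - 1) := Real.rpow_nonneg (by linarith [hs.2]) _
  unfold G Psi
  rcases le_or_gt s t with h | h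
  · rw [if_pos h, ← mul_div_assoc]
    refine (div_le_div_iff_of_pos_right hΓ).2 ?_
    have key : (t - s) ^ (α - 1) ≤ t ^ (α - 1) * (1 - s) ^ (α - 1) := by
      rw [← Real.mul_rpow ht.1 (by linarith [hs.2])]
      exact Real.rpow_le_rpow (by linarith) (by nlinarith [hs.1, ht.2]) hc0
    nlinarith [key]
  · rw [if_neg (not_le.2 h), ← mul_div_assoc]
    refine (div_le_div_iff_of_pos_right hΓ).2 ?_
    nlinarith [Real.rpow_nonneg ht.1 (α - 1), hΨ0]

lemma gA_sm {α : ℝ} (hα : 1 < α) (ν : MeasureTheory.SignedMeasure ℝ) :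
    StronglyMeasurable (gA α ν) := by
  have hG : StronglyMeasurable (fun q : ℝ × ℝ => G α q.2 q.1) :=
    ((G_cont hα).comp (continuous_snd.prodMk continuous_fst)).stronglyMeasurable
  have h1 : StronglyMeasurable fun s : ℝ =>
      ∫ t in Icc (0:ℝ) 1, G α t s ∂ν.toJordanDecomposition.posPart :=
    hG.integral_prod_right'
      (ν := ν.toJordanDecomposition.posPart.restrict (Icc (0:ℝ) 1))
  have h2 : StronglyMeasurable fun s : ℝ =>
      ∫ t in Icc (0:ℝ) 1, G α t s ∂ν.toJordanDecomposition.negPart :=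
    hG.integral_prod_right'
      (ν := ν.toJordanDecomposition.negPart.restrict (Icc (0:ℝ) 1))
  exact h1.sub h2

lemma gA_abs_le {α : ℝ} (hα : 1 < α) (ν : MeasureTheory.SignedMeasure ℝ) {s : ℝ}
    (hs : s ∈ Icc (0:ℝ) 1) :
    |gA α ν s| ≤ 2 / Real.Gamma α *
      ((ν.toJordanDecomposition.posPart (Icc (0:ℝ) 1)).toReal
        + (ν.toJordanDecomposition.negPart (Icc (0:ℝ) 1)).toReal) := by
  have b1 : ‖∫ t in Icc (0:ℝ) 1, G α t s ∂ν.toJordanDecomposition.posPart‖ ≤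
      2 / Real.Gamma α * (ν.toJordanDecomposition.posPart (Icc (0:ℝ) 1)).toReal :=
    norm_setIntegral_le_of_norm_le_const (measure_lt_top _ _)
      (fun t ht => by rw [Real.norm_eq_abs]; exact G_abs_le hα ht hs)
  have b2 : ‖∫ t in Icc (0:ℝ) 1, G α t s ∂ν.toJordanDecomposition.negPart‖ ≤
      2 / Real.Gamma α * (ν.toJordanDecomposition.negPart (Icc (0:ℝ) 1)).toReal :=
    norm_setIntegral_le_of_norm_le_const (measure_lt_top _ _)
      (fun t ht => by rw [Real.norm_eq_abs]; exact G_abs_le hα ht hs)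
  rw [Real.norm_eq_abs] at b1 b2
  unfold gA stInt
  calc |(∫ t in Icc (0:ℝ) 1, G α t s ∂ν.toJordanDecomposition.posPart)
        - ∫ t in Icc (0:ℝ) 1, G α t s ∂ν.toJordanDecomposition.negPart|
      ≤ |∫ t in Icc (0:ℝ) 1, G α t s ∂ν.toJordanDecomposition.posPart|
        + |∫ t in Icc (0:ℝ) 1, G α t s ∂ν.toJordanDecomposition.negPart| := abs_sub _ _
    _ ≤ 2 / Real.Gamma α *
        ((ν.toJordanDecomposition.posPart (Icc (0:ℝ) 1)).toReal
          + (ν.toJordanDecomposition.negPart (Icc (0:ℝ) 1)).toReal) := by linarith [b1, b2, mul_add (2 / Real.Gamma α) (ν.toJordanDecomposition.posPart (Icc (0:ℝ) 1)).toReal (ν.toJordanDecomposition.negPart (Icc (0:ℝ) 1)).toReal]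

lemma integrableOn_Icc_of_bound {f : ℝ → ℝ}
    (hm : AEStronglyMeasurable f (volume.restrict (Icc (0:ℝ) 1))) {M : ℝ}
    (hb : ∀ s ∈ Icc (0:ℝ) 1, |f s| ≤ M) :
    IntegrableOn f (Icc (0:ℝ) 1) :=
  ⟨hm, HasFiniteIntegral.restrict_of_bounded (C := M) measure_Icc_lt_top
    ((ae_restrict_iff' measurableSet_Icc).2 (ae_of_all _ (fun s hs => by
      rw [Real.norm_eq_abs]; exact hb s hs)))⟩

end Aux


/-- Lower iterate estimate in the proof of Lemma 2.8: for every `n ≥ 1` and `t ∈ [0,1]`,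
`(Kⁿ𝟙)(t) ≥ ρ(t)·τ₂·τ₁^(n−1)`, where `𝟙` is the constant function `1`. -/
theorem K_iterate_one_ge (α η μ₀ β : ℝ) (ν : MeasureTheory.SignedMeasure ℝ)
    (hα₁ : 2 < α) (hα₂ : α ≤ 3) (hη : η ∈ Ioo (0:ℝ) 1) (hμ : 0 ≤ μ₀) (hβ : 0 ≤ β)
    (hΛ₀ : 0 ≤ Lam η μ₀ β ν) (hΛ₁ : Lam η μ₀ β ν < 1)
    (hgA : ∀ s ∈ Icc (0:ℝ) 1, 0 ≤ gA α ν s)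
    (K : C(Icc (0:ℝ) 1, ℝ) →L[ℝ] C(Icc (0:ℝ) 1, ℝ))
    (hK : ∀ u : C(Icc (0:ℝ) 1, ℝ), ∀ t : Icc (0:ℝ) 1,
      K u t = ∫ s in Icc (0:ℝ) 1, Hker α η μ₀ β ν t s * u (projIcc 0 1 zero_le_one s)) :
    ∀ n : ℕ, 1 ≤ n → ∀ t : Icc (0:ℝ) 1,
      rho α η t * tau2 α η μ₀ β ν * tau1 α η μ₀ β ν ^ (n - 1)
        ≤ (K ^ n) (1 : C(Icc (0:ℝ) 1, ℝ)) t := by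
  obtain ⟨hη0, hη1⟩ := hη
  have hα1 : (1:ℝ) < α := by linarith
  have hα2' : (2:ℝ) ≤ α := hα₁.le
  have hΓ : 0 < Real.Gamma α := Real.Gamma_pos_of_pos (by linarith)
  have hc0 : (0:ℝ) ≤ α - 1 := by linarith
  have hc1 : (1:ℝ) ≤ α - 1 := by linarith
  have hD : (0:ℝ) < 1 - Lam η μ₀ β ν := by linarith
  have hηIcc : η ∈ Icc (0:ℝ) 1 := ⟨hη0.le, hη1.le⟩
  have hP : 0 ≤ β / (1 - Lam η μ₀ β ν) := div_nonneg hβ hD.le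
  have hQ : 0 ≤ μ₀ / (1 - Lam η μ₀ β ν) := div_nonneg hμ hD.le
  have hq0 : 0 ≤ (μ₀ - Lam η μ₀ β ν + 1) / (1 - Lam η μ₀ β ν) := div_nonneg (by linarith) hD.le
  -- pointwise estimates
  have hrho_bounds : ∀ t ∈ Icc (0:ℝ) 1, 0 ≤ rho α η t ∧ rho α η t ≤ t := by
    intro t ht
    have ha0 : 0 ≤ η - η ^ (α - 1) := by
      have := rpow_le_self' hη0.le hη1.le hc1; linarith
    have ha1 : η - η ^ (α - 1) ≤ 1 := by
      have := Real.rpow_nonneg hη0.le (α - 1); linarith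
    have hb0 : 0 ≤ t - t ^ (α - 1) := by
      have := rpow_le_self' ht.1 ht.2 hc1; linarith
    have hbt : t - t ^ (α - 1) ≤ t := by
      have := Real.rpow_nonneg ht.1 (α - 1); linarith
    refine ⟨mul_nonneg ha0 hb0, ?_⟩
    calc (η - η ^ (α - 1)) * (t - t ^ (α - 1)) ≤ 1 * t := mul_le_mul ha1 hbt hb0 zero_le_one
      _ = t := one_mul t
  have hΨ_nonneg : ∀ s ∈ Icc (0:ℝ) 1, 0 ≤ Psi α s := fun s hs =>
    div_nonneg (Real.rpow_nonneg (by linarith [hs.2]) _) hΓ.le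
  have hΨ_le : ∀ s ∈ Icc (0:ℝ) 1, Psi α s ≤ 1 / Real.Gamma α := fun s hs =>
    (div_le_div_iff_of_pos_right hΓ).2 (Real.rpow_le_one (by linarith [hs.2]) (by linarith [hs.1]) hc0)
  have hG_nonneg : ∀ t ∈ Icc (0:ℝ) 1, ∀ s ∈ Icc (0:ℝ) 1, 0 ≤ G α t s := by
    intro t ht s hs
    have hb0 : 0 ≤ t - t ^ (α - 1) := by
      have := rpow_le_self' ht.1 ht.2 hc1; linarith
    exact le_trans (mul_nonneg hb0 (hΨ_nonneg s hs)) (G_lower hα2' ht hs)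
  have hG_le : ∀ t ∈ Icc (0:ℝ) 1, ∀ s ∈ Icc (0:ℝ) 1, G α t s ≤ 2 / Real.Gamma α :=
    fun t ht s hs => (abs_le.1 (G_abs_le hα1 ht hs)).2
  have hΦ_nonneg : ∀ s ∈ Icc (0:ℝ) 1, 0 ≤ Phi α η μ₀ β ν s := by
    intro s hs
    have h1 : 0 ≤ β / (1 - Lam η μ₀ β ν) * gA α ν s := mul_nonneg hP (hgA s hs)
    have h2 : 0 ≤ (μ₀ - Lam η μ₀ β ν + 1) / (1 - Lam η μ₀ β ν) * Psi α s :=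
      mul_nonneg hq0 (hΨ_nonneg s hs)
    unfold Phi; linarith
  -- the key pointwise inequality
  have hkey : ∀ t ∈ Icc (0:ℝ) 1, ∀ s ∈ Icc (0:ℝ) 1,
      rho α η t * Phi α η μ₀ β ν s ≤ Hker α η μ₀ β ν t s := by
    intro t ht s hs
    have ha0 : 0 ≤ η - η ^ (α - 1) := by
      have := rpow_le_self' hη0.le hη1.le hc1; linarith
    have ha1 : η - η ^ (α - 1) ≤ 1 := by
      have := Real.rpow_nonneg hη0.le (α - 1); linarith
    have hb0 : 0 ≤ t - t ^ (α - 1) := by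
      have := rpow_le_self' ht.1 ht.2 hc1; linarith
    have hbt : t - t ^ (α - 1) ≤ t := by
      have := Real.rpow_nonneg ht.1 (α - 1); linarith
    have habt : (η - η ^ (α - 1)) * (t - t ^ (α - 1)) ≤ t := (hrho_bounds t ht).2
    have hgAs := hgA s hs
    have hΨs := hΨ_nonneg s hs
    have hGη : (η - η ^ (α - 1)) * Psi α s ≤ G α η s := G_lower hα2' hηIcc hs
    have hGt : (t - t ^ (α - 1)) * Psi α s ≤ G α t s := G_lower hα2' ht hs
    have T1 : (η - η ^ (α - 1)) * (t - t ^ (α - 1)) * (β / (1 - Lam η μ₀ β ν) * gA α ν s)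
        ≤ β * t / (1 - Lam η μ₀ β ν) * gA α ν s := by
      calc (η - η ^ (α - 1)) * (t - t ^ (α - 1)) * (β / (1 - Lam η μ₀ β ν) * gA α ν s)
          ≤ t * (β / (1 - Lam η μ₀ β ν) * gA α ν s) :=
            mul_le_mul_of_nonneg_right habt (mul_nonneg hP hgAs)
        _ = β * t / (1 - Lam η μ₀ β ν) * gA α ν s := by ring
    have T2 : (η - η ^ (α - 1)) * (t - t ^ (α - 1)) * (μ₀ / (1 - Lam η μ₀ β ν) * Psi α s)
        ≤ μ₀ * t / (1 - Lam η μ₀ β ν) * G α η s := by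
      have s2 : μ₀ / (1 - Lam η μ₀ β ν) * ((η - η ^ (α - 1)) * Psi α s)
          ≤ μ₀ / (1 - Lam η μ₀ β ν) * G α η s := mul_le_mul_of_nonneg_left hGη hQ
      have s3 : (t - t ^ (α - 1)) * (μ₀ / (1 - Lam η μ₀ β ν) * ((η - η ^ (α - 1)) * Psi α s))
          ≤ t * (μ₀ / (1 - Lam η μ₀ β ν) * G α η s) :=
        mul_le_mul hbt s2 (mul_nonneg hQ (mul_nonneg ha0 hΨs)) ht.1
      calc (η - η ^ (α - 1)) * (t - t ^ (α - 1)) * (μ₀ / (1 - Lam η μ₀ β ν) * Psi α s)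
          = (t - t ^ (α - 1)) * (μ₀ / (1 - Lam η μ₀ β ν) * ((η - η ^ (α - 1)) * Psi α s)) := by
            ring
        _ ≤ t * (μ₀ / (1 - Lam η μ₀ β ν) * G α η s) := s3
        _ = μ₀ * t / (1 - Lam η μ₀ β ν) * G α η s := by ring
    have T3 : (η - η ^ (α - 1)) * (t - t ^ (α - 1)) * Psi α s ≤ G α t s := by
      calc (η - η ^ (α - 1)) * (t - t ^ (α - 1)) * Psi α s
          = (η - η ^ (α - 1)) * ((t - t ^ (α - 1)) * Psi α s) := by ring
        _ ≤ 1 * ((t - t ^ (α - 1)) * Psi α s) :=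
            mul_le_mul_of_nonneg_right ha1 (mul_nonneg hb0 hΨs)
        _ = (t - t ^ (α - 1)) * Psi α s := one_mul _
        _ ≤ G α t s := hGt
    have hq : (μ₀ - Lam η μ₀ β ν + 1) / (1 - Lam η μ₀ β ν)
        = μ₀ / (1 - Lam η μ₀ β ν) + 1 := by
      field_simp
      ring
    unfold rho Phi Hker
    rw [hq]
    nlinarith [T1, T2, T3]
  have hH_nonneg : ∀ t ∈ Icc (0:ℝ) 1, ∀ s ∈ Icc (0:ℝ) 1, 0 ≤ Hker α η μ₀ β ν t s :=
    fun t ht s hs =>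
      le_trans (mul_nonneg (hrho_bounds t ht).1 (hΦ_nonneg s hs)) (hkey t ht s hs)
  -- bounds and integrability
  have hgAb : ∀ s ∈ Icc (0:ℝ) 1, |gA α ν s| ≤ 2 / Real.Gamma α *
      ((ν.toJordanDecomposition.posPart (Icc (0:ℝ) 1)).toReal
        + (ν.toJordanDecomposition.negPart (Icc (0:ℝ) 1)).toReal) :=
    fun s hs => gA_abs_le hα1 ν hs
  set Cg : ℝ := 2 / Real.Gamma α *
      ((ν.toJordanDecomposition.posPart (Icc (0:ℝ) 1)).toReal
        + (ν.toJordanDecomposition.negPart (Icc (0:ℝ) 1)).toReal) with hCgdef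
  have hCg0 : 0 ≤ Cg := mul_nonneg (by positivity)
    (add_nonneg ENNReal.toReal_nonneg ENNReal.toReal_nonneg)
  have hgA_le : ∀ s ∈ Icc (0:ℝ) 1, gA α ν s ≤ Cg := fun s hs => (abs_le.1 (hgAb s hs)).2
  have hgAsm : StronglyMeasurable (gA α ν) := gA_sm hα1 ν
  have hΨc : Continuous (Psi α) := by
    have : Continuous fun s : ℝ => (1 - s) ^ (α - 1) / Real.Gamma α :=
      ((Real.continuous_rpow_const hc0).comp (continuous_const.sub continuous_id)).div_const _
    exact this
  have hGtc : ∀ t : ℝ, Continuous (fun s => G α t s) := fun t =>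
    (G_cont hα1).comp (continuous_const.prodMk continuous_id)
  have hΦm : AEStronglyMeasurable (Phi α η μ₀ β ν) (volume.restrict (Icc (0:ℝ) 1)) := by
    have h1 := (hgAsm.aestronglyMeasurable
      (μ := volume.restrict (Icc (0:ℝ) 1))).const_mul (β / (1 - Lam η μ₀ β ν))
    have h2 := (hΨc.aestronglyMeasurable
      (μ := volume.restrict (Icc (0:ℝ) 1))).const_mul
        ((μ₀ - Lam η μ₀ β ν + 1) / (1 - Lam η μ₀ β ν))
    exact h1.add h2
  have hΦb : ∀ s ∈ Icc (0:ℝ) 1, |Phi α η μ₀ β ν s| ≤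
      β / (1 - Lam η μ₀ β ν) * Cg
        + (μ₀ - Lam η μ₀ β ν + 1) / (1 - Lam η μ₀ β ν) * (1 / Real.Gamma α) := by
    intro s hs
    rw [abs_of_nonneg (hΦ_nonneg s hs)]
    have h1 : β / (1 - Lam η μ₀ β ν) * gA α ν s ≤ β / (1 - Lam η μ₀ β ν) * Cg :=
      mul_le_mul_of_nonneg_left (hgA_le s hs) hP
    have h2 : (μ₀ - Lam η μ₀ β ν + 1) / (1 - Lam η μ₀ β ν) * Psi α s
        ≤ (μ₀ - Lam η μ₀ β ν + 1) / (1 - Lam η μ₀ β ν) * (1 / Real.Gamma α) :=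
      mul_le_mul_of_nonneg_left (hΨ_le s hs) hq0
    unfold Phi; linarith
  have hIntΦ : IntegrableOn (Phi α η μ₀ β ν) (Icc (0:ℝ) 1) :=
    integrableOn_Icc_of_bound hΦm hΦb
  have hρc : Continuous (rho α η) := by
    have : Continuous fun t : ℝ => (η - η ^ (α - 1)) * (t - t ^ (α - 1)) :=
      continuous_const.mul (continuous_id.sub (Real.continuous_rpow_const hc0))
    exact this
  have hρ_abs : ∀ s ∈ Icc (0:ℝ) 1, |rho α η s| ≤ 1 := by
    intro s hs
    rw [abs_of_nonneg (hrho_bounds s hs).1]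
    exact le_trans (hrho_bounds s hs).2 hs.2
  have hIntρΦ : IntegrableOn (fun s => rho α η s * Phi α η μ₀ β ν s) (Icc (0:ℝ) 1) := by
    have hbnd : ∀ s ∈ Icc (0:ℝ) 1, |rho α η s * Phi α η μ₀ β ν s| ≤
        β / (1 - Lam η μ₀ β ν) * Cg
          + (μ₀ - Lam η μ₀ β ν + 1) / (1 - Lam η μ₀ β ν) * (1 / Real.Gamma α) := by
      intro s hs
      rw [abs_mul]
      have h := mul_le_mul (hρ_abs s hs) (hΦb s hs) (abs_nonneg _) zero_le_one
      rw [one_mul] at h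
      exact h
    exact integrableOn_Icc_of_bound ((hρc.aestronglyMeasurable).mul hΦm) hbnd
  have hτ2 : 0 ≤ tau2 α η μ₀ β ν := setIntegral_nonneg measurableSet_Icc hΦ_nonneg
  have hτ1 : 0 ≤ tau1 α η μ₀ β ν := setIntegral_nonneg measurableSet_Icc
    (fun s hs => mul_nonneg (hrho_bounds s hs).1 (hΦ_nonneg s hs))
  -- measurability and bound for the kernel
  have hHm : ∀ t : Icc (0:ℝ) 1, AEStronglyMeasurable (fun s => Hker α η μ₀ β ν ↑t s)
      (volume.restrict (Icc (0:ℝ) 1)) := by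
    intro t
    have h1 := (hgAsm.aestronglyMeasurable
      (μ := volume.restrict (Icc (0:ℝ) 1))).const_mul (β * ↑t / (1 - Lam η μ₀ β ν))
    have h2 := ((hGtc η).aestronglyMeasurable
      (μ := volume.restrict (Icc (0:ℝ) 1))).const_mul (μ₀ * ↑t / (1 - Lam η μ₀ β ν))
    have h3 := (hGtc ↑t).aestronglyMeasurable (μ := volume.restrict (Icc (0:ℝ) 1))
    exact (h1.add h2).add h3
  set MH : ℝ := β / (1 - Lam η μ₀ β ν) * Cg
      + μ₀ / (1 - Lam η μ₀ β ν) * (2 / Real.Gamma α) + 2 / Real.Gamma α with hMHdef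
  have hMH0 : 0 ≤ MH :=
    add_nonneg (add_nonneg (mul_nonneg hP hCg0) (mul_nonneg hQ (by positivity)))
      (by positivity)
  have hHb : ∀ t : Icc (0:ℝ) 1, ∀ s ∈ Icc (0:ℝ) 1, |Hker α η μ₀ β ν ↑t s| ≤ MH := by
    intro t s hs
    rw [abs_of_nonneg (hH_nonneg ↑t t.2 s hs)]
    have ht1 : (↑t:ℝ) ≤ 1 := t.2.2
    have ht0 : (0:ℝ) ≤ ↑t := t.2.1
    have c1 : β * ↑t / (1 - Lam η μ₀ β ν) ≤ β / (1 - Lam η μ₀ β ν) := by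
      rw [div_le_div_iff₀ hD hD]
      have := mul_le_mul_of_nonneg_left ht1 (mul_nonneg hβ hD.le)
      nlinarith [this]
    have c1' : 0 ≤ β * ↑t / (1 - Lam η μ₀ β ν) := div_nonneg (mul_nonneg hβ ht0) hD.le
    have c2 : μ₀ * ↑t / (1 - Lam η μ₀ β ν) ≤ μ₀ / (1 - Lam η μ₀ β ν) := by
      rw [div_le_div_iff₀ hD hD]
      have := mul_le_mul_of_nonneg_left ht1 (mul_nonneg hμ hD.le)
      nlinarith [this]
    have c2' : 0 ≤ μ₀ * ↑t / (1 - Lam η μ₀ β ν) := div_nonneg (mul_nonneg hμ ht0) hD.le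
    have t1 : β * ↑t / (1 - Lam η μ₀ β ν) * gA α ν s ≤ β / (1 - Lam η μ₀ β ν) * Cg :=
      mul_le_mul c1 (hgA_le s hs) (hgA s hs) hP
    have t2 : μ₀ * ↑t / (1 - Lam η μ₀ β ν) * G α η s
        ≤ μ₀ / (1 - Lam η μ₀ β ν) * (2 / Real.Gamma α) :=
      mul_le_mul c2 (hG_le η hηIcc s hs) (hG_nonneg η hηIcc s hs) hQ
    have t3 : G α ↑t s ≤ 2 / Real.Gamma α := hG_le ↑t t.2 s hs
    unfold Hker; linarith
  have hIntH : ∀ t : Icc (0:ℝ) 1, IntegrableOn (fun s => Hker α η μ₀ β ν ↑t s)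
      (Icc (0:ℝ) 1) := fun t => integrableOn_Icc_of_bound (hHm t) (hHb t)
  -- base estimate
  have Kbase : ∀ t : Icc (0:ℝ) 1, rho α η ↑t * tau2 α η μ₀ β ν ≤ K 1 t := by
    intro t
    rw [hK 1 t]
    simp only [ContinuousMap.one_apply, mul_one]
    calc rho α η ↑t * tau2 α η μ₀ β ν
        = ∫ s in Icc (0:ℝ) 1, rho α η ↑t * Phi α η μ₀ β ν s :=
          (integral_const_mul _ _).symm
      _ ≤ ∫ s in Icc (0:ℝ) 1, Hker α η μ₀ β ν ↑t s :=
          setIntegral_mono_on (hIntΦ.const_mul _) (hIntH t) measurableSet_Icc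
            (fun s hs => hkey ↑t t.2 s hs)
  -- inductive step estimate
  have Kstep : ∀ (u : C(Icc (0:ℝ) 1, ℝ)) (c : ℝ), 0 ≤ c →
      (∀ x : Icc (0:ℝ) 1, c * rho α η ↑x ≤ u x) →
      ∀ t : Icc (0:ℝ) 1, rho α η ↑t * c * tau1 α η μ₀ β ν ≤ K u t := by
    intro u c hc hu t
    rw [hK u t]
    have hum : AEStronglyMeasurable (fun s => u (projIcc 0 1 zero_le_one s))
        (volume.restrict (Icc (0:ℝ) 1)) :=
      (u.continuous.comp continuous_projIcc).aestronglyMeasurable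
    have hIntHu : IntegrableOn
        (fun s => Hker α η μ₀ β ν ↑t s * u (projIcc 0 1 zero_le_one s)) (Icc (0:ℝ) 1) := by
      have hbnd : ∀ s ∈ Icc (0:ℝ) 1,
          |Hker α η μ₀ β ν ↑t s * u (projIcc 0 1 zero_le_one s)| ≤ MH * ‖u‖ := by
        intro s hs
        rw [abs_mul]
        have h2 : |u (projIcc 0 1 zero_le_one s)| ≤ ‖u‖ := by
          rw [← Real.norm_eq_abs]; exact u.norm_coe_le_norm _
        exact mul_le_mul (hHb t s hs) h2 (abs_nonneg _) hMH0
      exact integrableOn_Icc_of_bound ((hHm t).mul hum) hbnd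
    calc rho α η ↑t * c * tau1 α η μ₀ β ν
        = ∫ s in Icc (0:ℝ) 1, rho α η ↑t * c * (rho α η s * Phi α η μ₀ β ν s) :=
          (integral_const_mul _ _).symm
      _ ≤ ∫ s in Icc (0:ℝ) 1, Hker α η μ₀ β ν ↑t s * u (projIcc 0 1 zero_le_one s) := by
          refine setIntegral_mono_on (hIntρΦ.const_mul _) hIntHu measurableSet_Icc ?_
          intro s hs
          have hus : c * rho α η s ≤ u (projIcc 0 1 zero_le_one s) := by
            rw [projIcc_of_mem _ hs]
            exact hu ⟨s, hs⟩
          have hρs0 : 0 ≤ rho α η s := (hrho_bounds s hs).1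
          have hcρ : 0 ≤ c * rho α η s := mul_nonneg hc hρs0
          have hHge : rho α η ↑t * Phi α η μ₀ β ν s ≤ Hker α η μ₀ β ν ↑t s :=
            hkey ↑t t.2 s hs
          have hH0 : 0 ≤ Hker α η μ₀ β ν ↑t s := hH_nonneg ↑t t.2 s hs
          have step1 := mul_le_mul_of_nonneg_right hHge hcρ
          have step2 := mul_le_mul_of_nonneg_left hus hH0
          have e : rho α η ↑t * c * (rho α η s * Phi α η μ₀ β ν s)
              = rho α η ↑t * Phi α η μ₀ β ν s * (c * rho α η s) := by ring
          rw [e]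
          exact le_trans step1 step2
  -- induction
  intro n hn
  induction n, hn using Nat.le_induction with
  | base =>
    intro t
    simpa using Kbase t
  | succ n hn ih =>
    intro t
    have hc : 0 ≤ tau2 α η μ₀ β ν * tau1 α η μ₀ β ν ^ (n - 1) :=
      mul_nonneg hτ2 (pow_nonneg hτ1 _)
    have hu : ∀ x : Icc (0:ℝ) 1,
        tau2 α η μ₀ β ν * tau1 α η μ₀ β ν ^ (n - 1) * rho α η ↑x ≤ (K ^ n) 1 x := by
      intro x
      calc tau2 α η μ₀ β ν * tau1 α η μ₀ β ν ^ (n - 1) * rho α η ↑x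
          = rho α η ↑x * tau2 α η μ₀ β ν * tau1 α η μ₀ β ν ^ (n - 1) := by ring
        _ ≤ (K ^ n) 1 x := ih x
    have hstep := Kstep ((K ^ n) (1 : C(Icc (0:ℝ) 1, ℝ)))
      (tau2 α η μ₀ β ν * tau1 α η μ₀ β ν ^ (n - 1)) hc hu t
    have hpow : tau1 α η μ₀ β ν ^ n = tau1 α η μ₀ β ν ^ (n - 1) * tau1 α η μ₀ β ν := by
      conv_lhs => rw [← Nat.succ_pred_eq_of_pos hn]
      rw [pow_succ, Nat.pred_eq_sub_one]
    calc rho α η ↑t * tau2 α η μ₀ β ν * tau1 α η μ₀ β ν ^ (n + 1 - 1)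
        = rho α η ↑t * (tau2 α η μ₀ β ν * tau1 α η μ₀ β ν ^ (n - 1))
            * tau1 α η μ₀ β ν := by
          simp only [Nat.add_sub_cancel]
          rw [hpow]; ring
      _ ≤ K ((K ^ n) 1) t := hstep
      _ = (K ^ (n + 1)) 1 t := by rw [pow_succ', ContinuousLinearMap.mul_apply]
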